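/- If Y₁, ..., Y_m are i.i.d. standard normal random variables, then for every x ∈ ℝ, P(max_{1≤i≤m} Y_i² - 2 log m + log log m ≤ x) → exp(-(1/√π) e^{-x/2}) as m → ∞. -/

import Mathlib

open Real Filter MeasureTheory Set ProbabilityTheory

lemma log_one_add_div_self_tendsto :
    Tendsto (fun u : ℝ => if u = 0 then 1 else Real.log (1+u) / u) (nhds 0) (nhds 1) := by
  have hd : HasDerivAt (fun u : ℝ => Real.log (1 + u)) 1 0 := by
    have h1 : HasDerivAt (fun u : ℝ => 1 + u) 1 0 := by
      simpa using (hasDerivAt_id (0:ℝ)).const_add 1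
    have := (Real.hasDerivAt_log (by norm_num : (1:ℝ) + 0 ≠ 0)).comp 0 h1
    simp at this
    exact this
  have hs := hasDerivAt_iff_tendsto_slope.mp hd
  rw [← nhdsNE_sup_pure (0:ℝ), tendsto_sup]
  constructor
  · refine hs.congr' ?_
    filter_upwards [self_mem_nhdsWithin] with u hu
    simp only [Set.mem_compl_iff, Set.mem_singleton_iff] at hu
    simp [slope, hu, div_eq_inv_mul]
  · have : (fun u : ℝ => if u = 0 then 1 else Real.log (1+u) / u) 0 = 1 := by simp
    rw [tendsto_pure_left]
    intro s hs'
    simp only [this]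
    exact mem_of_mem_nhds hs'

lemma pow_tendsto_exp {p : ℕ → ℝ} {c : ℝ}
    (h : Tendsto (fun m : ℕ => ((m:ℝ) + 1) * p m) atTop (nhds c)) :
    Tendsto (fun m => (1 - p m) ^ (m + 1)) atTop (nhds (Real.exp (-c))) := by
  have hp0 : Tendsto p atTop (nhds 0) := by
    have hinv : Tendsto (fun m : ℕ => ((m:ℝ) + 1)⁻¹) atTop (nhds 0) := by
      apply tendsto_inv_atTop_zero.comp
      exact tendsto_atTop_add_const_right _ 1 tendsto_natCast_atTop_atTop
    have := h.mul hinv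
    rw [mul_zero] at this
    refine this.congr' ?_
    filter_upwards [eventually_ge_atTop 0] with m _
    have hm : ((m:ℝ) + 1) ≠ 0 := by positivity
    field_simp
  set g : ℝ → ℝ := fun u => if u = 0 then 1 else Real.log (1+u) / u with hg
  have hgt : Tendsto (fun m => g (-(p m))) atTop (nhds 1) :=
    log_one_add_div_self_tendsto.comp (by simpa using hp0.neg)
  have hkey : Tendsto (fun m : ℕ => ((m:ℝ)+1) * Real.log (1 - p m)) atTop (nhds (-c)) := by
    have h2 : Tendsto (fun m : ℕ => (((m:ℝ)+1) * (-(p m))) * g (-(p m))) atTop (nhds (-c)) := by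
      have := (h.neg.mul hgt)
      simpa [mul_comm, mul_assoc, mul_left_comm, neg_mul] using this
    refine h2.congr ?_
    intro m
    by_cases hpm : p m = 0
    · simp [hpm, hg]
    · have : -(p m) ≠ 0 := neg_ne_zero.mpr hpm
      simp only [hg, if_neg this]
      have : (1 : ℝ) + -(p m) = 1 - p m := by ring
      rw [this]
      field_simp
  have hlt1 : ∀ᶠ m in atTop, p m < 1 := hp0.eventually_lt_const (by norm_num)
  have := (Real.continuous_exp.tendsto _).comp hkey
  refine this.congr' ?_
  filter_upwards [hlt1] with m hm
  have hpos : 0 < 1 - p m := by linarith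
  simp only [Function.comp_apply]
  rw [show ((m:ℝ)+1) = ((m+1 : ℕ) : ℝ) by push_cast; ring, Real.exp_nat_mul, Real.exp_log hpos]

lemma exp_sq_deriv (y : ℝ) : HasDerivAt (fun y : ℝ => -Real.exp (-y^2/2)) (y * Real.exp (-y^2/2)) y := by
  have h1 : HasDerivAt (fun y : ℝ => -y^2/2) (-y) y := by
    have := ((hasDerivAt_pow 2 y).neg).div_const 2
    refine this.congr_deriv ?_
    push_cast
    ring
  have h2 := (h1.exp).neg
  refine h2.congr_deriv ?_
  ring

lemma exp_sq_tendsto : Tendsto (fun y : ℝ => Real.exp (-y^2/2)) atTop (nhds 0) := by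
  have h1 : Tendsto (fun y : ℝ => y^2/2) atTop atTop :=
    (tendsto_pow_atTop two_ne_zero).atTop_div_const (by norm_num)
  have := Real.tendsto_exp_neg_atTop_nhds_zero.comp h1
  refine this.congr fun y => by simp [Function.comp, neg_div]

lemma integrableOn_exp_sq (a : ℝ) : IntegrableOn (fun y : ℝ => Real.exp (-y^2/2)) (Ioi a) := by
  have := integrable_exp_neg_mul_sq (by norm_num : (0:ℝ) < 1/2)
  refine (this.congr ?_).integrableOn
  filter_upwards with y
  ring_nf

lemma integral_id_mul_gauss {a : ℝ} (ha : 0 < a) :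
    (IntegrableOn (fun y : ℝ => y * Real.exp (-y^2/2)) (Ioi a)) ∧
    ∫ y in Set.Ioi a, y * Real.exp (-y^2/2) = Real.exp (-a^2/2) := by
  have hderiv : ∀ y ∈ Ici a, HasDerivAt (fun y : ℝ => -Real.exp (-y^2/2)) (y * Real.exp (-y^2/2)) y :=
    fun y _ => exp_sq_deriv y
  have htend : Tendsto (fun y : ℝ => -Real.exp (-y^2/2)) atTop (nhds 0) := by
    simpa using exp_sq_tendsto.neg
  have hnonneg : ∀ y ∈ Ioi a, 0 ≤ y * Real.exp (-y^2/2) := by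
    intro y hy
    have : 0 < y := lt_trans ha hy
    positivity
  have hint : IntegrableOn (fun y : ℝ => y * Real.exp (-y^2/2)) (Ioi a) :=
    integrableOn_Ioi_deriv_of_nonneg ((hderiv a self_mem_Ici).continuousAt.continuousWithinAt)
      (fun y hy => hderiv y (Set.Ioi_subset_Ici_self hy)) hnonneg htend
  refine ⟨hint, ?_⟩
  have := integral_Ioi_of_hasDerivAt_of_tendsto' hderiv hint htend
  simpa using this

lemma gauss_tail_upper {a : ℝ} (ha : 0 < a) :
    ∫ y in Set.Ioi a, Real.exp (-y^2/2) ≤ a⁻¹ * Real.exp (-a^2/2) := by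
  obtain ⟨hint, hval⟩ := integral_id_mul_gauss ha
  have h1 : ∫ y in Set.Ioi a, Real.exp (-y^2/2) ≤ ∫ y in Set.Ioi a, a⁻¹ * (y * Real.exp (-y^2/2)) := by
    refine setIntegral_mono_on (integrableOn_exp_sq a) (hint.const_mul _) measurableSet_Ioi ?_
    intro y hy
    have hya : a ≤ y := le_of_lt hy
    have hy0 : 0 < y := lt_of_lt_of_le ha hya
    rw [← mul_assoc]
    have : (1:ℝ) ≤ a⁻¹ * y := by
      rw [← div_eq_inv_mul]
      exact (one_le_div ha).mpr hya
    nlinarith [Real.exp_pos (-y^2/2), Real.exp_le_exp.mpr (by nlinarith : -y^2/2 ≤ -y^2/2)]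
  rw [integral_const_mul, hval] at h1
  exact h1

lemma lower_deriv {y : ℝ} (hy : 0 < y) :
    HasDerivAt (fun y : ℝ => (y⁻¹*y⁻¹*y⁻¹ - y⁻¹) * Real.exp (-y^2/2))
      ((1 - 3*(y⁻¹)^4) * Real.exp (-y^2/2)) y := by
  have hy0 : y ≠ 0 := ne_of_gt hy
  have hinv : HasDerivAt (fun y : ℝ => y⁻¹) (-(y^2)⁻¹) y := hasDerivAt_inv hy0
  have hcube := (hinv.mul hinv).mul hinv
  have hpoly := hcube.sub hinv
  have h1 : HasDerivAt (fun y : ℝ => -y^2/2) (-y) y := by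
    have := ((hasDerivAt_pow 2 y).neg).div_const 2
    refine this.congr_deriv ?_
    push_cast; ring
  have hexp := h1.exp
  have := hpoly.mul hexp
  refine this.congr_deriv ?_
  simp only [Pi.mul_apply, Pi.sub_apply]
  field_simp
  ring

lemma integrableOn_exp_sq' (a : ℝ) : IntegrableOn (fun y : ℝ => Real.exp (-y^2/2)) (Ioi a) := by
  have := integrable_exp_neg_mul_sq (by norm_num : (0:ℝ) < 1/2)
  refine (this.congr ?_).integrableOn
  filter_upwards with y
  ring_nf

lemma lower_tendsto : Tendsto (fun y : ℝ => (y⁻¹*y⁻¹*y⁻¹ - y⁻¹) * Real.exp (-y^2/2)) atTop (nhds 0) := by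
  have hinv : Tendsto (fun y : ℝ => y⁻¹) atTop (nhds 0) := tendsto_inv_atTop_zero
  have h1 : Tendsto (fun y : ℝ => y⁻¹*y⁻¹*y⁻¹ - y⁻¹) atTop (nhds 0) := by
    have := ((hinv.mul hinv).mul hinv).sub hinv
    simpa using this
  have h2 : Tendsto (fun y : ℝ => Real.exp (-y^2/2)) atTop (nhds 0) := by
    have h1' : Tendsto (fun y : ℝ => y^2/2) atTop atTop :=
      (tendsto_pow_atTop two_ne_zero).atTop_div_const (by norm_num)
    have := Real.tendsto_exp_neg_atTop_nhds_zero.comp h1'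
    refine this.congr fun y => by simp [Function.comp, neg_div]
  simpa using h1.mul h2

lemma gauss_tail_lower {a : ℝ} (ha : 2 ≤ a) :
    (a⁻¹ - a⁻¹*a⁻¹*a⁻¹) * Real.exp (-a^2/2) ≤ ∫ y in Set.Ioi a, Real.exp (-y^2/2) := by
  have ha0 : 0 < a := lt_of_lt_of_le (by norm_num) ha
  have hderiv : ∀ y ∈ Ici a, HasDerivAt (fun y : ℝ => (y⁻¹*y⁻¹*y⁻¹ - y⁻¹) * Real.exp (-y^2/2))
      ((1 - 3*(y⁻¹)^4) * Real.exp (-y^2/2)) y :=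
    fun y hy => lower_deriv (lt_of_lt_of_le ha0 hy)
  have hnonneg : ∀ y ∈ Ioi a, 0 ≤ (1 - 3*(y⁻¹)^4) * Real.exp (-y^2/2) := by
    intro y hy
    have hy2 : 2 ≤ y := le_of_lt (lt_of_le_of_lt ha hy)
    have hy0 : 0 < y := by linarith
    have hinvle : y⁻¹ ≤ 2⁻¹ := by
      rw [inv_le_inv₀ hy0 (by norm_num)]
      exact hy2
    have hinv0 : 0 < y⁻¹ := inv_pos.mpr hy0
    have : 3*(y⁻¹)^4 ≤ 3*(2⁻¹:ℝ)^4 := by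
      gcongr
    have h1 : (0:ℝ) ≤ 1 - 3*(y⁻¹)^4 := by
      norm_num at this ⊢
      linarith
    positivity
  have hint : IntegrableOn (fun y : ℝ => (1 - 3*(y⁻¹)^4) * Real.exp (-y^2/2)) (Ioi a) :=
    integrableOn_Ioi_deriv_of_nonneg ((hderiv a self_mem_Ici).continuousAt.continuousWithinAt)
      (fun y hy => hderiv y (Set.Ioi_subset_Ici_self hy)) hnonneg lower_tendsto
  have hval := integral_Ioi_of_hasDerivAt_of_tendsto' hderiv hint lower_tendsto
  have hmono : ∫ y in Set.Ioi a, (1 - 3*(y⁻¹)^4) * Real.exp (-y^2/2) ≤ ∫ y in Set.Ioi a, Real.exp (-y^2/2) := by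
    refine setIntegral_mono_on hint (integrableOn_exp_sq' a) measurableSet_Ioi ?_
    intro y hy
    have hy0 : 0 < y := lt_of_lt_of_le ha0 (le_of_lt hy)
    have h4 : 0 < (y⁻¹)^4 := by positivity
    nlinarith [Real.exp_pos (-y^2/2)]
  rw [hval] at hmono
  calc (a⁻¹ - a⁻¹*a⁻¹*a⁻¹) * Real.exp (-a^2/2)
      = 0 - (a⁻¹*a⁻¹*a⁻¹ - a⁻¹) * Real.exp (-a^2/2) := by ring
    _ ≤ ∫ y in Set.Ioi a, Real.exp (-y^2/2) := hmono

lemma gaussian_pdf_eq : gaussianPDFReal 0 1 = fun y : ℝ => (Real.sqrt (2*π))⁻¹ * Real.exp (-y^2/2) := by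
  funext y
  simp [gaussianPDFReal]

lemma sq_set_eq {t : ℝ} (ht : 0 ≤ t) :
    {y : ℝ | y^2 ≤ t} = Icc (-(Real.sqrt t)) (Real.sqrt t) := by
  ext y
  simp only [Set.mem_setOf_eq, Set.mem_Icc]
  constructor
  · intro h
    have h1 : Real.sqrt (y^2) ≤ Real.sqrt t := Real.sqrt_le_sqrt h
    rw [Real.sqrt_sq_eq_abs] at h1
    exact abs_le.mp h1
  · intro ⟨h1, h2⟩
    have : |y| ≤ Real.sqrt t := abs_le.mpr ⟨h1, h2⟩
    calc y^2 = |y|^2 := (sq_abs y).symm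
      _ ≤ (Real.sqrt t)^2 := by gcongr
      _ = t := Real.sq_sqrt ht

lemma gauss_sq_prob {t : ℝ} (ht : 0 ≤ t) :
    (gaussianReal 0 1 {y : ℝ | y^2 ≤ t}).toReal
      = 1 - 2 * ((Real.sqrt (2*π))⁻¹ * ∫ y in Set.Ioi (Real.sqrt t), Real.exp (-y^2/2)) := by
  set a := Real.sqrt t with ha
  have ha0 : 0 ≤ a := Real.sqrt_nonneg t
  have hint : Integrable (gaussianPDFReal 0 1) := integrable_gaussianPDFReal 0 1
  rw [sq_set_eq ht, gaussianReal_apply_eq_integral 0 one_ne_zero,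
    ENNReal.toReal_ofReal (setIntegral_nonneg measurableSet_Icc
      (fun y _ => gaussianPDFReal_nonneg 0 1 y))]
  have htotal : ∫ y, gaussianPDFReal 0 1 y = 1 := integral_gaussianPDFReal_eq_one 0 one_ne_zero
  have hsplit1 : (∫ y in Iic a, gaussianPDFReal 0 1 y) + ∫ y in Ioi a, gaussianPDFReal 0 1 y = 1 := by
    rw [← htotal]
    exact intervalIntegral.integral_Iic_add_Ioi hint.integrableOn hint.integrableOn
  have hsplit2 : (∫ y in Iio (-a), gaussianPDFReal 0 1 y) + ∫ y in Icc (-a) a, gaussianPDFReal 0 1 y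
      = ∫ y in Iic a, gaussianPDFReal 0 1 y := by
    rw [← setIntegral_union (by
        rw [Set.disjoint_left]; intro y hy1 hy2
        exact absurd hy2.1 (not_le.mpr hy1)) measurableSet_Icc
      hint.integrableOn hint.integrableOn,
      Set.Iio_union_Icc_eq_Iic (by linarith)]
  have hsym : ∫ y in Iio (-a), gaussianPDFReal 0 1 y = ∫ y in Ioi a, gaussianPDFReal 0 1 y := by
    have heven : ∀ y : ℝ, gaussianPDFReal 0 1 (-y) = gaussianPDFReal 0 1 y := by
      intro y; rw [gaussian_pdf_eq]; simp [neg_sq]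
    rw [← integral_Iic_eq_integral_Iio, ← integral_comp_neg_Ioi]
    refine setIntegral_congr_fun measurableSet_Ioi fun y _ => heven y
  have hioi : ∫ y in Ioi a, gaussianPDFReal 0 1 y
      = (Real.sqrt (2*π))⁻¹ * ∫ y in Set.Ioi a, Real.exp (-y^2/2) := by
    rw [gaussian_pdf_eq, integral_const_mul]
  rw [hsym] at hsplit2
  rw [← hsplit2] at hsplit1
  rw [hioi] at hsplit1
  linarith

theorem max_sq_gaussian_gumbel_limit
    {Ω : Type*} [MeasureSpace Ω] [IsProbabilityMeasure (ℙ : Measure Ω)]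
    (Y : ℕ → Ω → ℝ)
    (hindep : iIndepFun Y ℙ)
    (hmeas : ∀ i, Measurable (Y i))
    (hgauss : ∀ i, Measure.map (Y i) ℙ = gaussianReal 0 1)
    (x : ℝ) :
    Tendsto
      (fun m : ℕ =>
        (ℙ {ω | (Finset.range (m + 1)).sup' Finset.nonempty_range_add_one
              (fun i => (Y i ω) ^ 2)
            - 2 * Real.log (m + 1) + Real.log (Real.log (m + 1)) ≤ x}).toReal)
      atTop
      (nhds (Real.exp (-(1 / Real.sqrt π) * Real.exp (-x / 2)))) := by
  classical
  set L : ℕ → ℝ := fun m => Real.log ((m:ℝ) + 1) with hLdef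
  set t : ℕ → ℝ := fun m => x + 2 * L m - Real.log (L m) with htdef
  set P : ℕ → ℝ := fun m =>
    2 * ((Real.sqrt (2*π))⁻¹ * ∫ y in Set.Ioi (Real.sqrt (t m)), Real.exp (-y^2/2)) with hPdef
  -- basic limits
  have hL : Tendsto L atTop atTop :=
    Real.tendsto_log_atTop.comp (tendsto_atTop_add_const_right _ 1 tendsto_natCast_atTop_atTop)
  have hLev : ∀ᶠ m in atTop, 1 ≤ L m := hL.eventually_ge_atTop 1
  have ht : Tendsto t atTop atTop := by
    refine tendsto_atTop_mono' atTop ?_ (tendsto_atTop_add_const_left _ x hL)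
    filter_upwards [hLev] with m hm
    have hlog : Real.log (L m) ≤ L m - 1 := Real.log_le_sub_one_of_pos (by linarith)
    simp only [htdef]
    linarith
  have htev : ∀ᶠ m in atTop, 4 ≤ t m := ht.eventually_ge_atTop 4
  -- L/t → 1/2
  have hLt : Tendsto (fun m => L m / t m) atTop (nhds (1/2)) := by
    have h1 : Tendsto (fun m => t m / L m) atTop (nhds 2) := by
      have hxL : Tendsto (fun m => x / L m) atTop (nhds 0) := by
        have := (tendsto_inv_atTop_zero.comp hL).const_mul x
        simpa [div_eq_mul_inv, mul_zero] using this
      have hlogL : Tendsto (fun m => Real.log (L m) / L m) atTop (nhds 0) := by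
        have h0 : Tendsto (fun y : ℝ => Real.log y / y) atTop (nhds 0) := by
          simpa using Real.isLittleO_log_id_atTop.tendsto_div_nhds_zero
        exact h0.comp hL
      have hsum : Tendsto (fun m => x / L m + 2 - Real.log (L m) / L m) atTop (nhds 2) := by
        have := (hxL.add_const 2).sub hlogL
        simpa using this
      refine hsum.congr' ?_
      filter_upwards [hLev] with m hm
      have hL0 : L m ≠ 0 := by linarith
      simp only [htdef]
      field_simp
    have h2 := h1.inv₀ (by norm_num)
    have : Tendsto (fun m => (t m / L m)⁻¹) atTop (nhds (1/2)) := by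
      convert h2 using 2
      norm_num
    refine this.congr' ?_
    filter_upwards [hLev, htev] with m hm1 hm2
    rw [inv_div]
  -- exp identity
  have hexp : ∀ᶠ m : ℕ in atTop, Real.exp (-(t m)/2)
      = Real.exp (-x/2) * Real.sqrt (L m) / ((m:ℝ)+1) := by
    filter_upwards [hLev] with m hm
    have hL0 : 0 < L m := by linarith
    have hm1 : (0:ℝ) < (m:ℝ) + 1 := by positivity
    have e1 : -(t m)/2 = -x/2 + (-(L m)) + Real.log (L m)/2 := by
      simp only [htdef]; ring
    rw [e1, Real.exp_add, Real.exp_add]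
    have e2 : Real.exp (-(L m)) = ((m:ℝ)+1)⁻¹ := by
      rw [Real.exp_neg, hLdef]
      simp [Real.exp_log hm1]
    have e3 : Real.exp (Real.log (L m)/2) = Real.sqrt (L m) := by
      rw [Real.sqrt_eq_rpow, Real.rpow_def_of_pos hL0, mul_one_div]
    rw [e2, e3]
    ring
  -- the limit constant
  have hconst : 2*(Real.sqrt (2*π))⁻¹*Real.exp (-x/2)*Real.sqrt (1/2)
      = (1 / Real.sqrt π) * Real.exp (-x/2) := by
    have hpi : (0:ℝ) < π := Real.pi_pos
    have h2 : Real.sqrt (2*π) = Real.sqrt 2 * Real.sqrt π := Real.sqrt_mul (by norm_num) π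
    have h12 : Real.sqrt (1/2) = 1 / Real.sqrt 2 := by
      rw [one_div, one_div, Real.sqrt_inv]
    have hs2 : Real.sqrt 2 * Real.sqrt 2 = 2 := Real.mul_self_sqrt (by norm_num)
    have hs2ne : Real.sqrt 2 ≠ 0 := by positivity
    have hspne : Real.sqrt π ≠ 0 := by positivity
    rw [h2, h12]
    field_simp
    linear_combination (-1 : ℝ) * hs2
  -- squeeze for (m+1) * P m
  set u : ℕ → ℝ := fun m => 2*(Real.sqrt (2*π))⁻¹*Real.exp (-x/2)*Real.sqrt (L m / t m) with hudef
  have hu : Tendsto u atTop (nhds ((1 / Real.sqrt π) * Real.exp (-x/2))) := by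
    rw [← hconst]
    exact (((Real.continuous_sqrt.tendsto _).comp hLt).const_mul _)
  have hul : Tendsto (fun m => u m * (1 - (t m)⁻¹)) atTop
      (nhds ((1 / Real.sqrt π) * Real.exp (-x/2))) := by
    have hti : Tendsto (fun m => (t m)⁻¹) atTop (nhds 0) := tendsto_inv_atTop_zero.comp ht
    have := hu.mul ((tendsto_const_nhds (x := (1:ℝ))).sub hti)
    simpa using this
  have hkey : ∀ᶠ m : ℕ in atTop,
      ((m:ℝ)+1) * (2*(Real.sqrt (2*π))⁻¹) * ((Real.sqrt (t m))⁻¹ * Real.exp (-(t m)/2)) = u m := by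
    filter_upwards [hLev, htev, hexp] with m hm1 hm2 hme
    have ht0 : (0:ℝ) < t m := by linarith
    have hL0 : (0:ℝ) ≤ L m := by linarith
    have hm1' : ((m:ℝ)+1) ≠ 0 := by positivity
    have hsq : Real.sqrt (L m / t m) = Real.sqrt (L m) / Real.sqrt (t m) :=
      Real.sqrt_div hL0 _
    have hst : Real.sqrt (t m) ≠ 0 := by positivity
    rw [hme, hudef]
    simp only
    rw [hsq]
    field_simp
  have hup : ∀ᶠ m : ℕ in atTop, ((m:ℝ)+1) * P m ≤ u m := by
    filter_upwards [hkey, htev] with m hkm hm2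
    have ht0 : (0:ℝ) < t m := by linarith
    have ha0 : 0 < Real.sqrt (t m) := Real.sqrt_pos.mpr ht0
    have hub := gauss_tail_upper ha0
    rw [Real.sq_sqrt (le_of_lt ht0)] at hub
    have hc : (0:ℝ) ≤ ((m:ℝ)+1) * (2*(Real.sqrt (2*π))⁻¹) := by positivity
    calc ((m:ℝ)+1) * P m
        = ((m:ℝ)+1) * (2*(Real.sqrt (2*π))⁻¹) * ∫ y in Set.Ioi (Real.sqrt (t m)), Real.exp (-y^2/2) := by
          simp only [hPdef]; ring
      _ ≤ ((m:ℝ)+1) * (2*(Real.sqrt (2*π))⁻¹) * ((Real.sqrt (t m))⁻¹ * Real.exp (-(t m)/2)) := by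
          refine mul_le_mul_of_nonneg_left ?_ hc
          convert hub using 2
      _ = u m := hkm
  have hlo : ∀ᶠ m : ℕ in atTop, u m * (1 - (t m)⁻¹) ≤ ((m:ℝ)+1) * P m := by
    filter_upwards [hkey, htev] with m hkm hm2
    have ht0 : (0:ℝ) < t m := by linarith
    have ha2 : (2:ℝ) ≤ Real.sqrt (t m) := by
      have : Real.sqrt 4 ≤ Real.sqrt (t m) := Real.sqrt_le_sqrt hm2
      rwa [show Real.sqrt 4 = 2 by
        rw [show (4:ℝ) = 2^2 by norm_num, Real.sqrt_sq (by norm_num)]] at this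
    have hlb := gauss_tail_lower ha2
    rw [Real.sq_sqrt (le_of_lt ht0)] at hlb
    have hc : (0:ℝ) ≤ ((m:ℝ)+1) * (2*(Real.sqrt (2*π))⁻¹) := by positivity
    have hinvsq : (Real.sqrt (t m))⁻¹ * (Real.sqrt (t m))⁻¹ = (t m)⁻¹ := by
      rw [← mul_inv, Real.mul_self_sqrt (le_of_lt ht0)]
    calc u m * (1 - (t m)⁻¹)
        = ((m:ℝ)+1) * (2*(Real.sqrt (2*π))⁻¹) *
            (((Real.sqrt (t m))⁻¹ - (Real.sqrt (t m))⁻¹*(Real.sqrt (t m))⁻¹*(Real.sqrt (t m))⁻¹)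
              * Real.exp (-(t m)/2)) := by
          rw [← hkm]
          rw [show ((Real.sqrt (t m))⁻¹ - (Real.sqrt (t m))⁻¹*(Real.sqrt (t m))⁻¹*(Real.sqrt (t m))⁻¹)
              = (Real.sqrt (t m))⁻¹ * (1 - (t m)⁻¹) by rw [← hinvsq]; ring]
          ring
      _ ≤ ((m:ℝ)+1) * (2*(Real.sqrt (2*π))⁻¹) * ∫ y in Set.Ioi (Real.sqrt (t m)), Real.exp (-y^2/2) := by
          refine mul_le_mul_of_nonneg_left ?_ hc
          convert hlb using 2
      _ = ((m:ℝ)+1) * P m := by simp only [hPdef]; ring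
  have hP : Tendsto (fun m : ℕ => ((m:ℝ)+1) * P m) atTop
      (nhds ((1 / Real.sqrt π) * Real.exp (-x/2))) :=
    tendsto_of_tendsto_of_tendsto_of_le_of_le' hul hu hlo hup
  have hpow := pow_tendsto_exp hP
  -- identify probabilities
  rw [show -(1 / Real.sqrt π) * Real.exp (-x / 2) = -((1 / Real.sqrt π) * Real.exp (-x/2)) by ring]
  refine hpow.congr' ?_
  · filter_upwards [htev] with m hm2
    have ht0 : (0:ℝ) ≤ t m := by linarith
    have hS : MeasurableSet {y : ℝ | y^2 ≤ t m} :=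
      measurableSet_le (measurable_id.pow_const 2) measurable_const
    have hEvent : {ω | (Finset.range (m + 1)).sup' Finset.nonempty_range_add_one
          (fun i => (Y i ω) ^ 2) - 2 * Real.log (m + 1) + Real.log (Real.log (m + 1)) ≤ x}
        = ⋂ i ∈ Finset.range (m+1), (Y i)⁻¹' {y : ℝ | y^2 ≤ t m} := by
      ext ω
      simp only [Set.mem_setOf_eq, Set.mem_iInter, Set.mem_preimage]
      rw [show ((Finset.range (m + 1)).sup' Finset.nonempty_range_add_one
          (fun i => (Y i ω) ^ 2) - 2 * Real.log (m + 1) + Real.log (Real.log (m + 1)) ≤ x)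
          ↔ ((Finset.range (m + 1)).sup' Finset.nonempty_range_add_one
          (fun i => (Y i ω) ^ 2) ≤ t m) from by
        simp only [htdef, hLdef]
        constructor <;> intro h <;> linarith]
      exact Finset.sup'_le_iff _ _
    rw [hEvent]
    have hprod : ℙ (⋂ i ∈ Finset.range (m+1), (Y i)⁻¹' {y : ℝ | y^2 ≤ t m})
        = ∏ i ∈ Finset.range (m+1), ℙ ((Y i)⁻¹' {y : ℝ | y^2 ≤ t m}) :=
      hindep.meas_biInter (fun i _ => ⟨{y : ℝ | y^2 ≤ t m}, hS, rfl⟩)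
    have heach : ∀ i, ℙ ((Y i)⁻¹' {y : ℝ | y^2 ≤ t m}) = gaussianReal 0 1 {y : ℝ | y^2 ≤ t m} := by
      intro i
      rw [← hgauss i, Measure.map_apply (hmeas i) hS]
    rw [hprod]
    simp_rw [heach]
    rw [Finset.prod_const, Finset.card_range, ENNReal.toReal_pow, gauss_sq_prob ht0]
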